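/- Let z ∈ ℂ with 0 < Re z < 1. For r > 0 set A_r(r) = ∫_{φ = -3π/4}^{π/4} f_r(r·exp(iφ))·(i·r·exp(iφ)) dφ, the integral of f_r along the circular arc of radius r centered at the origin between angles -3π/4 and π/4. Then r^(1 - Re z)·‖A_r(r)‖ tends to ‖exp(i(z-1)π/4) - exp(-3i(z-1)π/4)‖/(2π·‖z - 1‖) as r → 0⁺, and this limit is positive (since exp(iπ(z-1)) ≠ 1 for 0 < Re z < 1); so the arc integral diverges like r^(Re z - 1) as r → 0. -/

import Mathlib

open Filter

/-- The right integrand `f_r(w) = w^(z-1)·exp(πi w²)/(exp(πi w) - exp(-πi w))`. -/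
noncomputable def fr (z w : ℂ) : ℂ :=
  w ^ (z - 1) * Complex.exp (Real.pi * Complex.I * w ^ 2) /
    (Complex.exp (Real.pi * Complex.I * w) - Complex.exp (-(Real.pi * Complex.I) * w))

/-- The integral of `f_r` along the circular arc of radius `r` centered at the
origin between angles `-3π/4` and `π/4`. -/
noncomputable def arcR (z : ℂ) (r : ℝ) : ℂ :=
  ∫ φ in (-(3 * Real.pi / 4))..(Real.pi / 4),
    fr z (r * Complex.exp (φ * Complex.I)) * (Complex.I * r * Complex.exp (φ * Complex.I))

namespace FrArcAux

/-- `w·exp(πi w²)/(exp(πi w) - exp(-πi w))`, extended by its limit `1/(2πi)` at `0`. -/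
noncomputable def G (w : ℂ) : ℂ :=
  if w = 0 then 1 / (2 * Real.pi * Complex.I)
  else w * Complex.exp (Real.pi * Complex.I * w ^ 2) /
    (Complex.exp (Real.pi * Complex.I * w) - Complex.exp (-(Real.pi * Complex.I) * w))

lemma denom_ne_zero {w : ℂ} (hw : w ≠ 0) (hw1 : ‖w‖ < 1) :
    Complex.exp (Real.pi * Complex.I * w) - Complex.exp (-(Real.pi * Complex.I) * w) ≠ 0 := by
  intro h
  have h2 := sub_eq_zero.mp h
  rw [Complex.exp_eq_exp_iff_exists_int] at h2
  obtain ⟨n, hn⟩ := h2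
  have hπ : (Real.pi : ℂ) ≠ 0 := Complex.ofReal_ne_zero.mpr Real.pi_ne_zero
  have hkey : w = (n : ℂ) := by
    have h3 : (Real.pi * Complex.I) * w = (Real.pi * Complex.I) * (n : ℂ) := by
      linear_combination hn / 2
    exact mul_left_cancel₀ (mul_ne_zero hπ Complex.I_ne_zero) h3
  rw [hkey] at hw hw1
  have : |(n : ℝ)| < 1 := by simpa using hw1
  have hn0 : n = 0 := by
    have h' : |n| < 1 := by exact_mod_cast this
    rw [abs_lt] at h'
    omega
  exact hw (by simp [hn0])

lemma G_limit : Tendsto (fun w : ℂ => w * Complex.exp (Real.pi * Complex.I * w ^ 2) /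
      (Complex.exp (Real.pi * Complex.I * w) - Complex.exp (-(Real.pi * Complex.I) * w)))
    (nhdsWithin 0 {(0:ℂ)}ᶜ) (nhds (1 / (2 * Real.pi * Complex.I))) := by
  set c : ℂ := 2 * Real.pi * Complex.I with hc_def
  have hπ : (Real.pi : ℂ) ≠ 0 := Complex.ofReal_ne_zero.mpr Real.pi_ne_zero
  have hc : c ≠ 0 := by
    simp only [hc_def]
    exact mul_ne_zero (mul_ne_zero two_ne_zero hπ) Complex.I_ne_zero
  -- slope limit
  have hd : HasDerivAt (fun w : ℂ => Complex.exp (c * w)) c 0 := by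
    simpa [Function.comp_def] using ((Complex.hasDerivAt_exp (c * 0)).comp 0 ((hasDerivAt_id (0:ℂ)).const_mul c))
  have hslope := hasDerivAt_iff_tendsto_slope.mp hd
  have h1 : Tendsto (fun w : ℂ => (Complex.exp (c * w) - 1) / w) (nhdsWithin 0 {(0:ℂ)}ᶜ)
      (nhds c) := by
    apply hslope.congr
    intro w
    simp [slope_def_field]
  have h2 : Tendsto (fun w : ℂ => w / (Complex.exp (c * w) - 1)) (nhdsWithin 0 {(0:ℂ)}ᶜ)
      (nhds (1 / c)) := by
    have := h1.inv₀ hc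
    simpa [inv_div, one_div] using this
  have h3 : Tendsto (fun w : ℂ => Complex.exp (Real.pi * Complex.I * w ^ 2) *
      Complex.exp (Real.pi * Complex.I * w) * (w / (Complex.exp (c * w) - 1)))
      (nhdsWithin 0 {(0:ℂ)}ᶜ) (nhds (1 / c)) := by
    have he1 : Tendsto (fun w : ℂ => Complex.exp (Real.pi * Complex.I * w ^ 2))
        (nhdsWithin 0 {(0:ℂ)}ᶜ) (nhds 1) := by
      have : ContinuousAt (fun w : ℂ => Complex.exp (Real.pi * Complex.I * w ^ 2)) 0 := by
        fun_prop
      simpa using this.continuousWithinAt.tendsto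
    have he2 : Tendsto (fun w : ℂ => Complex.exp (Real.pi * Complex.I * w))
        (nhdsWithin 0 {(0:ℂ)}ᶜ) (nhds 1) := by
      have : ContinuousAt (fun w : ℂ => Complex.exp (Real.pi * Complex.I * w)) 0 := by
        fun_prop
      simpa using this.continuousWithinAt.tendsto
    simpa using (he1.mul he2).mul h2
  apply h3.congr
  intro w
  have hD : Complex.exp (Real.pi * Complex.I * w) - Complex.exp (-(Real.pi * Complex.I) * w)
      = Complex.exp (-(Real.pi * Complex.I) * w) * (Complex.exp (c * w) - 1) := by
    rw [mul_sub, ← Complex.exp_add, mul_one]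
    congr 2
    ring
  have he : Complex.exp (-(Real.pi * Complex.I) * w) = (Complex.exp (Real.pi * Complex.I * w))⁻¹ := by
    rw [← Complex.exp_neg]
    congr 1
    ring
  have h2e : Complex.exp (c * w) = Complex.exp (Real.pi * Complex.I * w) *
      Complex.exp (Real.pi * Complex.I * w) := by
    rw [← Complex.exp_add]
    congr 1
    simp only [hc_def]
    ring
  rw [hD, he, h2e]
  set e := Complex.exp (Real.pi * Complex.I * w) with he_def
  have hene : e ≠ 0 := Complex.exp_ne_zero _
  rcases eq_or_ne (e * e - 1) 0 with h | h
  · simp [h]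
  · field_simp

lemma G_zero : G 0 = 1 / (2 * Real.pi * Complex.I) := by simp [G]

lemma G_continuousAt_zero : ContinuousAt G 0 := by
  have h : Tendsto G (nhdsWithin 0 {(0:ℂ)}ᶜ ⊔ pure 0) (nhds (G 0)) := by
    rw [tendsto_sup]
    constructor
    · rw [G_zero]
      apply G_limit.congr'
      filter_upwards [self_mem_nhdsWithin] with w hw
      simp only [Set.mem_compl_iff, Set.mem_singleton_iff] at hw
      simp [G, hw]
    · exact tendsto_pure_nhds G 0
  rwa [nhdsNE_sup_pure] at h

lemma G_continuousAt {w : ℂ} (hw1 : ‖w‖ < 1) : ContinuousAt G w := by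
  rcases eq_or_ne w 0 with rfl | hw
  · exact G_continuousAt_zero
  · have hev : ∀ᶠ v in nhds w, (fun v : ℂ => v * Complex.exp (Real.pi * Complex.I * v ^ 2) /
        (Complex.exp (Real.pi * Complex.I * v) - Complex.exp (-(Real.pi * Complex.I) * v))) v
        = G v := by
      filter_upwards [eventually_ne_nhds hw] with v hv
      simp [G, hv]
    apply ContinuousAt.congr ?_ hev
    apply ContinuousAt.div
    · fun_prop
    · fun_prop
    · exact denom_ne_zero hw hw1

lemma G_bound : ∃ C : ℝ, 0 ≤ C ∧ ∀ w : ℂ, ‖w‖ ≤ 1/2 → ‖G w‖ ≤ C := by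
  obtain ⟨C, hC⟩ := (isCompact_closedBall (0:ℂ) (1/2)).exists_bound_of_continuousOn
    (fun w hw => by
      refine (G_continuousAt ?_).continuousWithinAt
      have : ‖w‖ ≤ 1/2 := by simpa [dist_eq_norm] using hw
      linarith)
  refine ⟨C, ?_, fun w hw => hC w (by simpa [dist_eq_norm] using hw)⟩
  exact le_trans (norm_nonneg _) (hC 0 (Metric.mem_closedBall_self (by norm_num)))

noncomputable def J (z : ℂ) (r : ℝ) : ℂ :=
  ∫ φ in (-(3 * Real.pi / 4))..(Real.pi / 4),
    Complex.exp ((z - 1) * (φ * Complex.I)) * Complex.I * G (r * Complex.exp (φ * Complex.I))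

lemma integrand_eq (z : ℂ) {r : ℝ} (hr : 0 < r) {φ : ℝ}
    (hφ : φ ∈ Set.uIcc (-(3 * Real.pi / 4)) (Real.pi / 4)) :
    fr z (r * Complex.exp (φ * Complex.I)) * (Complex.I * r * Complex.exp (φ * Complex.I)) =
    Complex.exp ((z - 1) * Real.log r) * (Complex.exp ((z - 1) * (φ * Complex.I)) * Complex.I *
      G (r * Complex.exp (φ * Complex.I))) := by
  have hπ := Real.pi_pos
  rw [Set.uIcc_of_le (by linarith)] at hφ
  obtain ⟨hφ1, hφ2⟩ := hφ
  have hφ1' : -Real.pi < φ := by linarith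
  have hφ2' : φ ≤ Real.pi := by linarith
  set w : ℂ := (r : ℂ) * Complex.exp (φ * Complex.I) with hw_def
  have hw : w ≠ 0 := by
    apply mul_ne_zero
    · exact_mod_cast ne_of_gt hr
    · exact Complex.exp_ne_zero _
  have hexp : Complex.exp ((Real.log r : ℂ) + φ * Complex.I) = w := by
    rw [Complex.exp_add, hw_def]
    congr 1
    rw [← Complex.ofReal_exp, Real.exp_log hr]
  have hlog : Complex.log w = (Real.log r : ℂ) + φ * Complex.I := by
    rw [← hexp, Complex.log_exp] <;> simp [hφ1', hφ2']
  have hcpow : w ^ (z - 1) = Complex.exp ((z - 1) * Real.log r) *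
      Complex.exp ((z - 1) * (φ * Complex.I)) := by
    rw [Complex.cpow_def_of_ne_zero hw, hlog, ← Complex.exp_add]
    congr 1
    ring
  have hG : G w = w * Complex.exp (Real.pi * Complex.I * w ^ 2) /
      (Complex.exp (Real.pi * Complex.I * w) - Complex.exp (-(Real.pi * Complex.I) * w)) := by
    simp [G, hw]
  simp only [fr, ← hw_def, hcpow, hG]
  ring

lemma arcR_eq (z : ℂ) {r : ℝ} (hr : 0 < r) :
    arcR z r = Complex.exp ((z - 1) * Real.log r) * J z r := by
  rw [arcR, J, ← intervalIntegral.integral_const_mul]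
  exact intervalIntegral.integral_congr (fun φ hφ => integrand_eq z hr hφ)

lemma norm_arcR (z : ℂ) {r : ℝ} (hr : 0 < r) :
    r ^ (1 - z.re) * ‖arcR z r‖ = ‖J z r‖ := by
  rw [arcR_eq z hr, norm_mul, Complex.norm_exp]
  have hre : ((z - 1) * (Real.log r : ℂ)).re = (z.re - 1) * Real.log r := by
    simp [Complex.mul_re]
  rw [hre, Real.rpow_def_of_pos hr, ← mul_assoc, ← Real.exp_add,
    show Real.log r * (1 - z.re) + (z.re - 1) * Real.log r = 0 by ring, Real.exp_zero, one_mul]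

lemma J_tendsto (z : ℂ) :
    Tendsto (fun r : ℝ => J z r) (nhdsWithin 0 (Set.Ioi 0)) (nhds (J z 0)) := by
  obtain ⟨C, hC0, hC⟩ := G_bound
  apply intervalIntegral.tendsto_integral_filter_of_dominated_convergence
    (bound := fun _ => Real.exp (‖z - 1‖ * Real.pi) * C)
  · -- measurability
    filter_upwards [Ioo_mem_nhdsGT_of_mem (by norm_num : (0:ℝ) ∈ Set.Ico (0:ℝ) (1/2))]
      with r hr
    apply Continuous.aestronglyMeasurable
    apply Continuous.mul
    · fun_prop
    · rw [continuous_iff_continuousAt]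
      intro φ
      have hG : ContinuousAt G ((r : ℂ) * Complex.exp (φ * Complex.I)) := by
        apply G_continuousAt
        have : ‖(r : ℂ) * Complex.exp (φ * Complex.I)‖ = r := by
          rw [norm_mul, Complex.norm_exp_ofReal_mul_I, Complex.norm_real, Real.norm_eq_abs,
            abs_of_pos hr.1, mul_one]
        rw [this]; linarith [hr.2]
      exact ContinuousAt.comp (f := fun x : ℝ => (r : ℂ) * Complex.exp (x * Complex.I)) hG (by fun_prop)
  · -- bound
    filter_upwards [Ioo_mem_nhdsGT_of_mem (by norm_num : (0:ℝ) ∈ Set.Ico (0:ℝ) (1/2))]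
      with r hr
    apply Filter.Eventually.of_forall
    intro φ hφ
    have hπ := Real.pi_pos
    rw [Set.uIoc_of_le (by linarith)] at hφ
    have hφabs : |φ| ≤ Real.pi := by
      rw [abs_le]; constructor <;> [linarith [hφ.1]; linarith [hφ.2]]
    have hnorm1 : ‖Complex.exp ((z - 1) * (φ * Complex.I))‖ ≤ Real.exp (‖z - 1‖ * Real.pi) := by
      rw [Complex.norm_exp]
      apply Real.exp_le_exp.mpr
      have : ((z - 1) * ((φ : ℂ) * Complex.I)).re = -(z - 1).im * φ := by
        simp [Complex.mul_re]
      rw [this]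
      calc -(z - 1).im * φ ≤ |(-(z - 1).im) * φ| := le_abs_self _
        _ = |(z - 1).im| * |φ| := by rw [abs_mul, abs_neg]
        _ ≤ ‖z - 1‖ * Real.pi := by
            apply mul_le_mul _ hφabs (abs_nonneg _) (norm_nonneg _)
            exact Complex.abs_im_le_norm _
    have hnorm2 : ‖G ((r : ℂ) * Complex.exp (φ * Complex.I))‖ ≤ C := by
      apply hC
      rw [norm_mul, Complex.norm_exp_ofReal_mul_I, Complex.norm_real, Real.norm_eq_abs,
        abs_of_pos hr.1, mul_one]
      linarith [hr.2]
    calc ‖Complex.exp ((z - 1) * (φ * Complex.I)) * Complex.I *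
          G ((r : ℂ) * Complex.exp (φ * Complex.I))‖
        = ‖Complex.exp ((z - 1) * (φ * Complex.I))‖ *
          ‖G ((r : ℂ) * Complex.exp (φ * Complex.I))‖ := by
          rw [norm_mul, norm_mul, Complex.norm_I, mul_one]
      _ ≤ Real.exp (‖z - 1‖ * Real.pi) * C := mul_le_mul hnorm1 hnorm2 (norm_nonneg _)
          (Real.exp_pos _).le
  · exact intervalIntegrable_const
  · apply Filter.Eventually.of_forall
    intro φ _
    apply Tendsto.mul tendsto_const_nhds
    have h1 : Tendsto (fun r : ℝ => (r : ℂ) * Complex.exp (φ * Complex.I)) (nhds 0)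
        (nhds 0) := by
      have hcont : Continuous (fun r : ℝ => (r : ℂ) * Complex.exp (φ * Complex.I)) := by fun_prop
      simpa using hcont.tendsto 0
    have h2 := (G_continuousAt_zero.tendsto.comp h1).mono_left
      (nhdsWithin_le_nhds (s := Set.Ioi (0:ℝ)))
    simpa [Function.comp_def] using h2

lemma norm_J_zero (z : ℂ) (hz : z ≠ 1) :
    ‖J z 0‖ = ‖Complex.exp (Complex.I * (z - 1) * Real.pi / 4) -
        Complex.exp (-(3 * Complex.I * (z - 1) * Real.pi) / 4)‖ / (2 * Real.pi * ‖z - 1‖) := by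
  have hπ := Real.pi_pos
  have hπc : (Real.pi : ℂ) ≠ 0 := Complex.ofReal_ne_zero.mpr Real.pi_ne_zero
  have hz1 : z - 1 ≠ 0 := sub_ne_zero.mpr hz
  have hc : (z - 1) * Complex.I ≠ 0 := mul_ne_zero hz1 Complex.I_ne_zero
  have hK : Complex.I * (1 / (2 * Real.pi * Complex.I)) = 1 / (2 * Real.pi) := by
    field_simp
  have hJ : J z 0 = (∫ φ in (-(3 * Real.pi / 4))..(Real.pi / 4),
      Complex.exp (((z - 1) * Complex.I) * (φ : ℂ))) * (1 / (2 * Real.pi)) := by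
    rw [J, ← intervalIntegral.integral_mul_const]
    apply intervalIntegral.integral_congr
    intro φ _
    show Complex.exp ((z - 1) * (φ * Complex.I)) * Complex.I *
        G (((0 : ℝ) : ℂ) * Complex.exp (φ * Complex.I)) =
      Complex.exp ((z - 1) * Complex.I * φ) * (1 / (2 * Real.pi))
    have h0 : ((0 : ℝ) : ℂ) * Complex.exp (φ * Complex.I) = 0 := by simp
    rw [h0, G_zero, mul_assoc, hK]
    congr 2
    ring
  rw [hJ, integral_exp_mul_complex hc]
  rw [norm_mul, norm_div, norm_mul, Complex.norm_I, mul_one]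
  have h1 : (z - 1) * Complex.I * ((Real.pi / 4 : ℝ) : ℂ) = Complex.I * (z - 1) * Real.pi / 4 := by
    push_cast; ring
  have h2 : (z - 1) * Complex.I * ((-(3 * Real.pi / 4) : ℝ) : ℂ) =
      -(3 * Complex.I * (z - 1) * Real.pi) / 4 := by
    push_cast; ring
  rw [h1, h2]
  have h3 : ‖(1 / (2 * (Real.pi : ℂ)))‖ = 1 / (2 * Real.pi) := by
    rw [norm_div, norm_one, norm_mul]
    simp [Complex.norm_real, abs_of_pos hπ]
  rw [h3]
  have hnz : ‖z - 1‖ ≠ 0 := norm_ne_zero_iff.mpr hz1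
  field_simp

lemma norm_pos (z : ℂ) (h0 : 0 < z.re) (h1 : z.re < 1) :
    0 < ‖Complex.exp (Complex.I * (z - 1) * Real.pi / 4) -
        Complex.exp (-(3 * Complex.I * (z - 1) * Real.pi) / 4)‖ / (2 * Real.pi * ‖z - 1‖) := by
  have hπ := Real.pi_pos
  have hz : z ≠ 1 := by intro h; rw [h] at h1; simp at h1
  have hz1 : z - 1 ≠ 0 := sub_ne_zero.mpr hz
  apply div_pos
  · rw [norm_pos_iff, sub_ne_zero]
    intro h
    rw [Complex.exp_eq_exp_iff_exists_int] at h
    obtain ⟨n, hn⟩ := h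
    have hπc : (Real.pi : ℂ) ≠ 0 := Complex.ofReal_ne_zero.mpr Real.pi_ne_zero
    have hkey : z - 1 = 2 * (n : ℂ) := by
      have h3 : (Real.pi * Complex.I) * (z - 1) = (Real.pi * Complex.I) * (2 * (n : ℂ)) := by
        linear_combination hn
      exact mul_left_cancel₀ (mul_ne_zero hπc Complex.I_ne_zero) h3
    have hre : z.re - 1 = 2 * (n : ℝ) := by
      have := congrArg Complex.re hkey
      simpa using this
    have hn1 : (n : ℝ) < 0 := by linarith
    have hn2 : (-1 : ℝ) < 2 * (n : ℝ) := by linarith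
    have hn1' : n < 0 := by exact_mod_cast hn1
    have : (n : ℝ) ≤ -1 := by exact_mod_cast (by omega : n ≤ -1)
    linarith
  · have hnz : 0 < ‖z - 1‖ := norm_pos_iff.mpr hz1
    positivity

end FrArcAux

open FrArcAux in
/-- Paper's Lemma 3.2 (right arc C̃_rc): the arc integral of `f_r` diverges like
`r^(Re z - 1)` as `r → 0⁺`; more precisely `r^(1 - Re z)·‖A_r(r)‖` tends to
`‖exp(i(z-1)π/4) - exp(-3i(z-1)π/4)‖/(2π‖z-1‖)`, a positive limit. -/
theorem fr_arc_singularity (z : ℂ) (h0 : 0 < z.re) (h1 : z.re < 1) :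
    Tendsto (fun r : ℝ => r ^ (1 - z.re) * ‖arcR z r‖)
      (nhdsWithin 0 (Set.Ioi 0))
      (nhds (‖Complex.exp (Complex.I * (z - 1) * Real.pi / 4) -
          Complex.exp (-(3 * Complex.I * (z - 1) * Real.pi) / 4)‖ /
        (2 * Real.pi * ‖z - 1‖))) ∧
    0 < ‖Complex.exp (Complex.I * (z - 1) * Real.pi / 4) -
          Complex.exp (-(3 * Complex.I * (z - 1) * Real.pi) / 4)‖ /
        (2 * Real.pi * ‖z - 1‖) := by
  constructor
  · have hz : z ≠ 1 := by intro h; rw [h] at h1; simp at h1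
    have ht := (J_tendsto z).norm
    rw [norm_J_zero z hz] at ht
    apply ht.congr'
    filter_upwards [self_mem_nhdsWithin] with r hr
    exact (norm_arcR z hr).symm
  · exact norm_pos z h0 h1
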